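/- Let f, g ∈ ℝ[z₁,…,zₙ] and let z_{n+1} be a new indeterminate. Then f ≪ g if and only if the polynomial g + z_{n+1}·f ∈ ℝ[z₁,…,zₙ,z_{n+1}] is real stable. Moreover, if f is real stable, then f ≪ g if and only if Im(g(z)/f(z)) ≥ 0 for every z = (z₁,…,zₙ) ∈ ℂⁿ with Im(zᵢ) > 0 for all 1 ≤ i ≤ n. -/

import Mathlib

open MvPolynomial

def IsStable {σ : Type*} (f : MvPolynomial σ ℂ) : Prop :=
  ∀ z : σ → ℂ, (∀ i, 0 < (z i).im) → eval z f ≠ 0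

def IsRealStable {σ : Type*} (f : MvPolynomial σ ℝ) : Prop :=
  IsStable (f.map (algebraMap ℝ ℂ))

def ProperPosition {σ : Type*} (f g : MvPolynomial σ ℝ) : Prop :=
  IsStable (g.map (algebraMap ℝ ℂ) + C Complex.I * f.map (algebraMap ℝ ℂ))

lemma factor_le {t r : ℂ} (ht : 0 < t.im) (hr : r.im ≤ 0) :
    ‖(starRingEnd ℂ) t - r‖ ≤ ‖t - r‖ := by
  rw [Complex.norm_def, Complex.norm_def]
  apply Real.sqrt_le_sqrt
  simp only [Complex.normSq_apply, Complex.sub_re, Complex.sub_im, Complex.conj_re,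
    Complex.conj_im]
  nlinarith [sq_nonneg (t.re - r.re)]

lemma multiset_prod_le (t : ℂ) (ht : 0 < t.im) (m : Multiset ℂ) (hm : ∀ r ∈ m, r.im ≤ 0) :
    (Multiset.map (fun a => ‖(starRingEnd ℂ) t - a‖) m).prod ≤
      (Multiset.map (fun a => ‖t - a‖) m).prod := by
  induction m using Multiset.induction_on with
  | empty => simp
  | cons r s ih =>
    simp only [Multiset.map_cons, Multiset.prod_cons]
    have h1 : r.im ≤ 0 := hm r (Multiset.mem_cons_self r s)
    have h2 := ih (fun x hx => hm x (Multiset.mem_cons_of_mem hx))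
    have hn : (0:ℝ) ≤ (Multiset.map (fun a => ‖(starRingEnd ℂ) t - a‖) s).prod := by
      apply Multiset.prod_nonneg
      intro x hx
      obtain ⟨a, _, rfl⟩ := Multiset.mem_map.mp hx
      exact norm_nonneg _
    exact mul_le_mul (factor_le ht h1) h2 hn (norm_nonneg _)

lemma abs_eval_conj_le (h : Polynomial ℂ)
    (hst : ∀ s : ℂ, 0 < s.im → h.eval s ≠ 0) (t : ℂ) (ht : 0 < t.im) :
    ‖h.eval ((starRingEnd ℂ) t)‖ ≤ ‖h.eval t‖ := by
  have hsplit : h.Splits := IsAlgClosed.splits h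
  rw [hsplit.eval_eq_prod_roots,
    hsplit.eval_eq_prod_roots]
  have hmp : ∀ m : Multiset ℂ, ‖m.prod‖ = (m.map (fun x => ‖x‖)).prod := fun m => by
    induction m using Multiset.induction_on with
    | empty => simp
    | cons a s ih => simp [ih]
  rw [norm_mul, norm_mul, hmp, hmp, Multiset.map_map, Multiset.map_map]
  refine mul_le_mul_of_nonneg_left ?_ (norm_nonneg _)
  apply multiset_prod_le t ht
  intro r hr
  by_contra hc
  push_neg at hc
  exact hst r hc (Polynomial.isRoot_of_mem_roots hr)

lemma conj_eval_map (p : Polynomial ℝ) (z : ℂ) :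
    (starRingEnd ℂ) ((p.map (algebraMap ℝ ℂ)).eval z) =
      (p.map (algebraMap ℝ ℂ)).eval ((starRingEnd ℂ) z) := by
  rw [Polynomial.eval_map, Polynomial.eval_map, Polynomial.hom_eval₂]
  congr 1
  ext x
  simp [Complex.conj_ofReal]

lemma eval_aeval_comp {n : ℕ} (p : MvPolynomial (Fin n) ℝ) (α β : Fin n → ℝ) (t : ℂ) :
    ((MvPolynomial.aeval (fun i => Polynomial.C (α i) + Polynomial.C (β i) * Polynomial.X) p).map
        (algebraMap ℝ ℂ)).eval t =
      MvPolynomial.eval (fun i => (α i : ℂ) + t * (β i : ℂ)) (p.map (algebraMap ℝ ℂ)) := by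
  induction p using MvPolynomial.induction_on with
  | C a => simp
  | add p q hp hq => simp [hp, hq]
  | mul_X p i hp => simp [hp]; ring_nf; tauto

/-- Core lemma: proper position implies `g + w f ≠ 0` pointwise on the upper half space. -/
lemma key_lemma {n : ℕ} (f g : MvPolynomial (Fin n) ℝ) (hpp : ProperPosition f g)
    (z : Fin n → ℂ) (hz : ∀ i, 0 < (z i).im) (w : ℂ) (hw : 0 < w.im) :
    eval z (g.map (algebraMap ℝ ℂ)) + w * eval z (f.map (algebraMap ℝ ℂ)) ≠ 0 := by
  set α : Fin n → ℝ := fun i => (z i).re with hα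
  set β : Fin n → ℝ := fun i => (z i).im with hβ
  set s : Fin n → Polynomial ℝ :=
    fun i => Polynomial.C (α i) + Polynomial.C (β i) * Polynomial.X with hs
  set P : Polynomial ℝ := MvPolynomial.aeval s f with hP
  set Q : Polynomial ℝ := MvPolynomial.aeval s g with hQ
  set Pc : Polynomial ℂ := P.map (algebraMap ℝ ℂ) with hPc
  set Qc : Polynomial ℂ := Q.map (algebraMap ℝ ℂ) with hQc
  set h : Polynomial ℂ := Qc + Polynomial.C Complex.I * Pc with hh
  -- evaluation of h
  have heval : ∀ t : ℂ, h.eval t =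
      MvPolynomial.eval (fun i => (α i : ℂ) + t * (β i : ℂ))
        (g.map (algebraMap ℝ ℂ) + C Complex.I * f.map (algebraMap ℝ ℂ)) := by
    intro t
    rw [hh, Polynomial.eval_add, Polynomial.eval_mul, Polynomial.eval_C, hPc, hP, hQc, hQ,
      eval_aeval_comp, eval_aeval_comp]
    simp only [map_add, map_mul, eval_C]
  -- stability of h
  have hstab : ∀ t : ℂ, 0 < t.im → h.eval t ≠ 0 := by
    intro t ht
    rw [heval t]
    apply hpp
    intro i
    simp only [Complex.add_im, Complex.ofReal_im, Complex.mul_im, Complex.ofReal_re,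
      Complex.ofReal_im, zero_add, mul_zero, add_zero]
    exact mul_pos ht (hz i)
  -- z = α + I β
  have hzI : (fun i => (α i : ℂ) + Complex.I * (β i : ℂ)) = z := by
    funext i
    apply Complex.ext <;>
      simp [hα, hβ, Complex.add_re, Complex.add_im, Complex.mul_re, Complex.mul_im]
  set a : ℂ := Pc.eval Complex.I with ha
  set b : ℂ := Qc.eval Complex.I with hb
  have haf : a = eval z (f.map (algebraMap ℝ ℂ)) := by
    rw [ha, hPc, hP, eval_aeval_comp, hzI]
  have hbg : b = eval z (g.map (algebraMap ℝ ℂ)) := by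
    rw [hb, hQc, hQ, eval_aeval_comp, hzI]
  -- h(I) ≠ 0
  have hI : h.eval Complex.I = b + Complex.I * a := by
    simp [hh, ha, hb]
  have hI0 : b + Complex.I * a ≠ 0 := by
    rw [← hI]; exact hstab Complex.I (by simp)
  -- the conjugate bound
  have h1 : (starRingEnd ℂ) (h.eval ((starRingEnd ℂ) Complex.I)) = b - Complex.I * a := by
    rw [hh, Polynomial.eval_add, Polynomial.eval_mul, Polynomial.eval_C, map_add, map_mul,
      Complex.conj_I, hPc, hQc, conj_eval_map, conj_eval_map]
    simp only [Complex.conj_conj, Complex.conj_neg_I]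
    rw [← hPc, ← hQc, ← ha, ← hb]
    ring
  have hconj : ‖b - Complex.I * a‖ ≤ ‖b + Complex.I * a‖ := by
    rw [← h1, Complex.norm_conj, ← hI]
    exact abs_eval_conj_le h hstab Complex.I (by simp)
  -- final combination argument
  rw [← haf, ← hbg]
  intro hcon
  have hid : (1 - Complex.I * w) * (b + Complex.I * a) =
      -((1 + Complex.I * w) * (b - Complex.I * a)) := by
    have : b + w * a = 0 := hcon
    linear_combination 2 * this - 2 * (w * a) * Complex.I_sq
  have habs : ‖1 - Complex.I * w‖ ≤ ‖1 + Complex.I * w‖ := by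
    have e1 : ‖1 - Complex.I * w‖ * ‖b + Complex.I * a‖ =
        ‖1 + Complex.I * w‖ * ‖b - Complex.I * a‖ := by
      rw [← norm_mul, ← norm_mul, hid, norm_neg]
    have e2 : ‖1 - Complex.I * w‖ * ‖b + Complex.I * a‖ ≤
        ‖1 + Complex.I * w‖ * ‖b + Complex.I * a‖ := by
      rw [e1]
      exact mul_le_mul_of_nonneg_left hconj (norm_nonneg _)
    have hpos : 0 < ‖b + Complex.I * a‖ := by
      simpa [norm_pos_iff] using hI0
    exact le_of_mul_le_mul_right e2 hpos
  have hsq : (‖1 - Complex.I * w‖)^2 ≤ (‖1 + Complex.I * w‖)^2 := by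
    apply pow_le_pow_left₀ (norm_nonneg _) habs
  rw [Complex.sq_norm, Complex.sq_norm] at hsq
  simp only [Complex.normSq_apply, Complex.sub_re, Complex.sub_im, Complex.add_re,
    Complex.add_im, Complex.one_re, Complex.one_im, Complex.mul_re, Complex.mul_im,
    Complex.I_re, Complex.I_im] at hsq
  nlinarith [hw]

theorem stmt0 {n : ℕ} (f g : MvPolynomial (Fin n) ℝ) :
    (ProperPosition f g ↔
      IsRealStable (rename Fin.castSucc g + X (Fin.last n) * rename Fin.castSucc f)) ∧
    (IsRealStable f →
      (ProperPosition f g ↔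
        ∀ z : Fin n → ℂ, (∀ i, 0 < (z i).im) →
          0 ≤ (eval z (g.map (algebraMap ℝ ℂ)) / eval z (f.map (algebraMap ℝ ℂ))).im)) := by
  constructor
  · constructor
    · intro hpp z hz
      have key := key_lemma f g hpp (fun i => z i.castSucc) (fun i => hz _) (z (Fin.last n))
        (hz _)
      intro hc
      apply key
      rw [← hc]
      simp [map_rename, eval_rename, Function.comp_def]
    · intro hst z hz
      set z' : Fin (n + 1) → ℂ := Fin.snoc z Complex.I with hz'def
      have hz' : ∀ i, 0 < (z' i).im := by
        intro i
        refine Fin.lastCases ?_ ?_ i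
        · simp [hz'def]
        · intro j; simpa [hz'def] using hz j
      have h0 := hst z' hz'
      intro hc
      apply h0
      rw [← hc]
      simp [map_rename, eval_rename, hz'def, Function.comp_def]
  · intro hf
    constructor
    · intro hpp z hz
      by_contra hlt
      push_neg at hlt
      set w : ℂ := -(eval z (g.map (algebraMap ℝ ℂ)) / eval z (f.map (algebraMap ℝ ℂ))) with hwdef
      have hw : 0 < w.im := by
        rw [hwdef, Complex.neg_im]; linarith
      have key := key_lemma f g hpp z hz w hw
      apply key
      have hfz := hf z hz
      rw [hwdef, neg_mul, div_mul_cancel₀ _ hfz, add_neg_cancel]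
    · intro him z hz
      have hfz := hf z hz
      have h2 := him z hz
      intro hc
      simp only [map_add, map_mul, eval_C] at hc
      have hdiv : eval z (g.map (algebraMap ℝ ℂ)) / eval z (f.map (algebraMap ℝ ℂ)) =
          -Complex.I := by
        rw [div_eq_iff hfz]
        linear_combination hc
      rw [hdiv] at h2
      simp at h2
      linarith
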